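/- (Lemma 3.3 of the paper, inequality part.) Let W and V be finite-dimensional real inner product spaces with dim W = dim V = n ≥ 2, and let l : W → V be a linear map that is area-nonincreasing: ‖l(w_1)‖²‖l(w_2)‖² − ⟨l(w_1), l(w_2)⟩² ≤ ‖w_1‖²‖w_2‖² − ⟨w_1, w_2⟩² for all w_1, w_2 ∈ W. Let R : V × V × V × V → ℝ be an algebraic curvature tensor (multilinear, with R(x,y,z,w) = −R(y,x,z,w) = −R(x,y,w,z), R(x,y,z,w) = R(z,w,x,y), and R(x,y,z,w) + R(y,z,x,w) + R(z,x,y,w) = 0) such that R(x,y,y,x) ≥ 0 for all x, y ∈ V. Then for every orthonormal basis {w_1, …, w_n} of W and every orthonormal basis {v_1, …, v_n} of V: Σ_{i<j} R(l(w_i), l(w_j), l(w_j), l(w_i)) ≤ Σ_{i<j} R(v_i, v_j, v_j, v_i). -/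

import Mathlib

open Finset
open scoped RealInnerProductSpace

section Helpers

variable {W V : Type*} [NormedAddCommGroup W] [InnerProductSpace ℝ W]
  [NormedAddCommGroup V] [InnerProductSpace ℝ V] {n : ℕ}

/-- The trace of a bilinear form over an orthonormal basis is basis independent. -/
private lemma sum_bilin_eq (B : W →ₗ[ℝ] W →ₗ[ℝ] ℝ) (e f : OrthonormalBasis (Fin n) ℝ W) :
    ∑ i, B (f i) (f i) = ∑ i, B (e i) (e i) := by
  have hexp : ∀ x : W, x = ∑ k, ⟪e k, x⟫ • e k := fun x => by
    simpa [e.repr_apply_apply] using (e.sum_repr x).symm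
  have h1 : ∀ i, B (f i) (f i) = ∑ k, ∑ m, ⟪e k, f i⟫ * (⟪e m, f i⟫ * B (e m) (e k)) := by
    intro i
    conv_lhs => rw [hexp (f i)]
    simp only [map_sum, map_smul, LinearMap.sum_apply, LinearMap.smul_apply, smul_eq_mul,
      Finset.mul_sum]
  have hkm : ∀ k m, ∑ i, ⟪e k, f i⟫ * ⟪e m, f i⟫ = ⟪e k, e m⟫ := by
    intro k m
    calc ∑ i, ⟪e k, f i⟫ * ⟪e m, f i⟫ = ∑ i, ⟪e k, f i⟫ * ⟪f i, e m⟫ := by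
          simp [real_inner_comm]
      _ = ⟪e k, e m⟫ := f.sum_inner_mul_inner _ _
  calc ∑ i, B (f i) (f i)
      = ∑ i, ∑ k, ∑ m, ⟪e k, f i⟫ * (⟪e m, f i⟫ * B (e m) (e k)) :=
        Finset.sum_congr rfl fun i _ => h1 i
    _ = ∑ k, ∑ m, (∑ i, ⟪e k, f i⟫ * ⟪e m, f i⟫) * B (e m) (e k) := by
        rw [Finset.sum_comm]
        refine Finset.sum_congr rfl fun k _ => ?_
        rw [Finset.sum_comm]
        refine Finset.sum_congr rfl fun m _ => ?_
        rw [Finset.sum_mul]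
        exact Finset.sum_congr rfl fun i _ => by ring
    _ = ∑ k, ∑ m, ⟪e k, e m⟫ * B (e m) (e k) := by
        refine Finset.sum_congr rfl fun k _ => Finset.sum_congr rfl fun m _ => ?_
        rw [hkm]
    _ = ∑ k, B (e k) (e k) := by
        refine Finset.sum_congr rfl fun k _ => ?_
        rw [Finset.sum_eq_single k]
        · have := orthonormal_iff_ite.mp e.orthonormal k k
          simp [this]
        · intro m _ hm
          have := orthonormal_iff_ite.mp e.orthonormal k m
          simp [this, (Ne.symm hm)]
        · simp

/-- The double trace of a quadrilinear form, precomposed with a linear map, over an orthonormal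
basis is basis independent. -/
private lemma sum_quad_eq (R : V →ₗ[ℝ] V →ₗ[ℝ] V →ₗ[ℝ] V →ₗ[ℝ] ℝ) (l : W →ₗ[ℝ] V)
    (e w : OrthonormalBasis (Fin n) ℝ W) :
    ∑ i, ∑ j, R (l (e i)) (l (e j)) (l (e j)) (l (e i)) =
      ∑ i, ∑ j, R (l (w i)) (l (w j)) (l (w j)) (l (w i)) := by
  have inner_eq : ∀ x : V, ∑ j, R x (l (e j)) (l (e j)) x = ∑ j, R x (l (w j)) (l (w j)) x := by
    intro x
    let B : W →ₗ[ℝ] W →ₗ[ℝ] ℝ := LinearMap.mk₂ ℝ (fun y z => R x (l y) (l z) x)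
      (fun y y' z => by simp) (fun c y z => by simp)
      (fun y z z' => by simp) (fun c y z => by simp)
    simpa [B] using sum_bilin_eq B w e
  have outer_eq : ∀ y : V, ∑ i, R (l (e i)) y y (l (e i)) = ∑ i, R (l (w i)) y y (l (w i)) := by
    intro y
    let B : W →ₗ[ℝ] W →ₗ[ℝ] ℝ := LinearMap.mk₂ ℝ (fun a b => R (l a) y y (l b))
      (fun a a' b => by simp) (fun c a b => by simp)
      (fun a b b' => by simp) (fun c a b => by simp)
    simpa [B] using sum_bilin_eq B w e
  calc ∑ i, ∑ j, R (l (e i)) (l (e j)) (l (e j)) (l (e i))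
      = ∑ i, ∑ j, R (l (e i)) (l (w j)) (l (w j)) (l (e i)) :=
        Finset.sum_congr rfl fun i _ => inner_eq _
    _ = ∑ j, ∑ i, R (l (e i)) (l (w j)) (l (w j)) (l (e i)) := Finset.sum_comm
    _ = ∑ j, ∑ i, R (l (w i)) (l (w j)) (l (w j)) (l (w i)) :=
        Finset.sum_congr rfl fun j _ => outer_eq _
    _ = ∑ i, ∑ j, R (l (w i)) (l (w j)) (l (w j)) (l (w i)) := Finset.sum_comm

private lemma full_eq_two_mul (g : Fin n → Fin n → ℝ) (hd : ∀ i, g i i = 0)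
    (hs : ∀ i j, g i j = g j i) :
    ∑ i, ∑ j, g i j = 2 * ∑ i, ∑ j ∈ Ioi i, g i j := by
  have hsplit : ∀ i : Fin n, ∑ j, g i j = ∑ j ∈ Ioi i, g i j + ∑ j ∈ Iio i, g i j := by
    intro i
    have hc : ∑ j ∈ ({i} : Finset (Fin n))ᶜ, g i j + ∑ j ∈ ({i} : Finset (Fin n)), g i j
        = ∑ j, g i j := Finset.sum_compl_add_sum {i} _
    have hdisj : Disjoint (Ioi i) (Iio i) := by
      simp only [Finset.disjoint_left, Finset.mem_Ioi, Finset.mem_Iio]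
      exact fun a ha hb => absurd hb (not_lt.mpr ha.le)
    have hset : ({i} : Finset (Fin n))ᶜ = (Ioi i).disjUnion (Iio i) hdisj := by
      ext j
      simp only [Finset.mem_compl, Finset.mem_singleton, Finset.mem_disjUnion,
        Finset.mem_Ioi, Finset.mem_Iio]
      constructor
      · intro hj
        rcases lt_or_gt_of_ne hj with h' | h'
        · exact Or.inr h'
        · exact Or.inl h'
      · rintro (h' | h') <;> exact fun hji => by simp [hji] at h'
    have hu : ∑ j ∈ ({i} : Finset (Fin n))ᶜ, g i j
        = ∑ j ∈ Ioi i, g i j + ∑ j ∈ Iio i, g i j := by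
      rw [hset, Finset.sum_disjUnion]
    rw [Finset.sum_singleton, hd i, add_zero] at hc
    rw [← hc, hu]
  have hswap : ∑ i, ∑ j ∈ Iio i, g i j = ∑ i, ∑ j ∈ Ioi i, g j i := by
    rw [Finset.sum_sigma', Finset.sum_sigma']
    refine Finset.sum_nbij' (fun p => ⟨p.2, p.1⟩) (fun p => ⟨p.2, p.1⟩) ?_ ?_ ?_ ?_ ?_ <;> simp
  calc ∑ i, ∑ j, g i j = ∑ i, (∑ j ∈ Ioi i, g i j + ∑ j ∈ Iio i, g i j) :=
        Finset.sum_congr rfl fun i _ => hsplit i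
    _ = (∑ i, ∑ j ∈ Ioi i, g i j) + ∑ i, ∑ j ∈ Iio i, g i j := Finset.sum_add_distrib
    _ = (∑ i, ∑ j ∈ Ioi i, g i j) + ∑ i, ∑ j ∈ Ioi i, g j i := by rw [hswap]
    _ = 2 * ∑ i, ∑ j ∈ Ioi i, g i j := by
        rw [two_mul]
        congr 1
        exact Finset.sum_congr rfl fun i _ => Finset.sum_congr rfl fun j _ => hs j i

end Helpers

/-- **Lemma 3.3 of the paper, inequality part.**
If `l : W → V` is an area-nonincreasing linear map between `n`-dimensional real inner
product spaces (`n ≥ 2`) and `R` is an algebraic curvature tensor on `V` with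
`sec ≥ 0`, then for every orthonormal basis `{w_i}` of `W` and `{v_i}` of `V`,
`∑_{i<j} R(l w_i, l w_j, l w_j, l w_i) ≤ ∑_{i<j} R(v_i, v_j, v_j, v_i)`,
i.e. `tr(L* ∘ R ∘ L) ≤ scal/2`. -/
theorem trace_inequality
    {W V : Type*} [NormedAddCommGroup W] [InnerProductSpace ℝ W]
    [NormedAddCommGroup V] [InnerProductSpace ℝ V]
    [FiniteDimensional ℝ W] [FiniteDimensional ℝ V]
    {n : ℕ} (hn : 2 ≤ n)
    (hW : Module.finrank ℝ W = n) (hV : Module.finrank ℝ V = n)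
    (l : W →ₗ[ℝ] V)
    (hl : ∀ w₁ w₂ : W,
      ‖l w₁‖ ^ 2 * ‖l w₂‖ ^ 2 - ⟪l w₁, l w₂⟫ ^ 2 ≤
        ‖w₁‖ ^ 2 * ‖w₂‖ ^ 2 - ⟪w₁, w₂⟫ ^ 2)
    (R : V →ₗ[ℝ] V →ₗ[ℝ] V →ₗ[ℝ] V →ₗ[ℝ] ℝ)
    (hR1 : ∀ x y z w : V, R x y z w = -R y x z w)
    (hR2 : ∀ x y z w : V, R x y z w = -R x y w z)
    (hR3 : ∀ x y z w : V, R x y z w = R z w x y)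
    (hRb : ∀ x y z w : V, R x y z w + R y z x w + R z x y w = 0)
    (hsec : ∀ x y : V, 0 ≤ R x y y x)
    (w : OrthonormalBasis (Fin n) ℝ W) (v : OrthonormalBasis (Fin n) ℝ V) :
    ∑ i, ∑ j ∈ Ioi i, R (l (w i)) (l (w j)) (l (w j)) (l (w i)) ≤
      ∑ i, ∑ j ∈ Ioi i, R (v i) (v j) (v j) (v i) := by
  classical
  -- the symmetric operator `l† ∘ l`
  set T : W →ₗ[ℝ] W := LinearMap.adjoint l ∘ₗ l with hTdef
  have hsym : T.IsSymmetric := by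
    intro x y
    simp only [hTdef, LinearMap.comp_apply]
    rw [LinearMap.adjoint_inner_left, LinearMap.adjoint_inner_right]
  set e : OrthonormalBasis (Fin n) ℝ W := hsym.eigenvectorBasis hW with hedef
  set μ : Fin n → ℝ := hsym.eigenvalues hW with hμdef
  have he : ∀ i, T (e i) = μ i • e i := fun i => by
    rw [hedef, hμdef]
    exact_mod_cast hsym.apply_eigenvectorBasis hW i
  have hinner : ∀ i j, ⟪l (e i), l (e j)⟫ = if i = j then μ i else 0 := by
    intro i j
    have h0 : ⟪l (e i), l (e j)⟫ = ⟪T (e i), e j⟫ := by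
      simp only [hTdef, LinearMap.comp_apply]
      rw [LinearMap.adjoint_inner_left]
    rw [h0, he i, real_inner_smul_left, orthonormal_iff_ite.mp e.orthonormal i j]
    by_cases hij : i = j <;> simp [hij]
  have hnorm : ∀ i, ‖l (e i)‖ ^ 2 = μ i := fun i => by
    rw [← real_inner_self_eq_norm_sq]
    simpa using hinner i i
  -- an orthonormal family in V built from the images
  set s : Set (Fin n) := {i | l (e i) ≠ 0} with hsdef
  set f' : Fin n → V := fun i => (‖l (e i)‖)⁻¹ • l (e i) with hf'def
  have horth : Orthonormal ℝ (s.restrict f') := by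
    rw [orthonormal_iff_ite]
    rintro ⟨i, hi⟩ ⟨j, hj⟩
    simp only [Set.restrict_apply, Set.restrict, hf'def]
    rw [real_inner_smul_left, real_inner_smul_right, hinner i j]
    by_cases hij : i = j
    · subst hij
      have hne : ‖l (e i)‖ ≠ 0 := norm_ne_zero_iff.mpr hi
      simp only [if_pos rfl, eq_self_iff_true, if_true]
      rw [← hnorm i]
      field_simp
    · simp [hij, Subtype.ext_iff]
  have hcard : Module.finrank ℝ V = Fintype.card (Fin n) := by simpa using hV
  obtain ⟨f, hf⟩ := horth.exists_orthonormalBasis_extension_of_card_eq hcard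
  -- pointwise comparison
  have key : ∀ i j, i ≠ j →
      R (l (e i)) (l (e j)) (l (e j)) (l (e i)) ≤ R (f i) (f j) (f j) (f i) := by
    intro i j hij
    by_cases hi : l (e i) = 0
    · simpa [hi] using hsec (f i) (f j)
    by_cases hj : l (e j) = 0
    · simpa [hj] using hsec (f i) (f j)
    have hfi : l (e i) = ‖l (e i)‖ • f i := by
      rw [hf i hi, hf'def, smul_smul, mul_inv_cancel₀ (norm_ne_zero_iff.mpr hi), one_smul]
    have hfj : l (e j) = ‖l (e j)‖ • f j := by
      rw [hf j hj, hf'def, smul_smul, mul_inv_cancel₀ (norm_ne_zero_iff.mpr hj), one_smul]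
    have hRf : 0 ≤ R (f i) (f j) (f j) (f i) := hsec _ _
    have hle1 : ‖l (e i)‖ ^ 2 * ‖l (e j)‖ ^ 2 ≤ 1 := by
      have h := hl (e i) (e j)
      have h1 : ⟪l (e i), l (e j)⟫ = 0 := by rw [hinner i j]; simp [hij]
      have h2 : ⟪e i, e j⟫ = 0 := by
        rw [orthonormal_iff_ite.mp e.orthonormal i j]; simp [hij]
      have h3 : ‖e i‖ = 1 := e.orthonormal.1 i
      have h4 : ‖e j‖ = 1 := e.orthonormal.1 j
      rw [h1, h2, h3, h4] at h
      simpa using h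
    calc R (l (e i)) (l (e j)) (l (e j)) (l (e i))
        = (‖l (e i)‖ ^ 2 * ‖l (e j)‖ ^ 2) * R (f i) (f j) (f j) (f i) := by
          conv_lhs => rw [hfi, hfj]
          simp only [map_smul, LinearMap.smul_apply, smul_eq_mul]
          ring
      _ ≤ 1 * R (f i) (f j) (f j) (f i) := mul_le_mul_of_nonneg_right hle1 hRf
      _ = R (f i) (f j) (f j) (f i) := one_mul _
  -- diagonal vanishing and symmetry
  have hdiag : ∀ x : V, R x x x x = 0 := fun x => by
    have := hR1 x x x x; linarith
  have hsymR : ∀ x y : V, R x y y x = R y x x y := fun x y => hR3 x y y x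
  -- the four full-sum identities
  have A1 : (∑ i, ∑ j, R (l (w i)) (l (w j)) (l (w j)) (l (w i))) =
      2 * ∑ i, ∑ j ∈ Ioi i, R (l (w i)) (l (w j)) (l (w j)) (l (w i)) :=
    full_eq_two_mul _ (fun i => hdiag _) (fun i j => hsymR _ _)
  have A2 : (∑ i, ∑ j, R (l (e i)) (l (e j)) (l (e j)) (l (e i))) =
      2 * ∑ i, ∑ j ∈ Ioi i, R (l (e i)) (l (e j)) (l (e j)) (l (e i)) :=
    full_eq_two_mul _ (fun i => hdiag _) (fun i j => hsymR _ _)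
  have A3 : (∑ i, ∑ j, R (f i) (f j) (f j) (f i)) =
      2 * ∑ i, ∑ j ∈ Ioi i, R (f i) (f j) (f j) (f i) :=
    full_eq_two_mul _ (fun i => hdiag _) (fun i j => hsymR _ _)
  have A4 : (∑ i, ∑ j, R (v i) (v j) (v j) (v i)) =
      2 * ∑ i, ∑ j ∈ Ioi i, R (v i) (v j) (v j) (v i) :=
    full_eq_two_mul _ (fun i => hdiag _) (fun i j => hsymR _ _)
  have B1 : (∑ i, ∑ j, R (l (e i)) (l (e j)) (l (e j)) (l (e i))) =
      ∑ i, ∑ j, R (l (w i)) (l (w j)) (l (w j)) (l (w i)) := sum_quad_eq R l e w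
  have B2 : (∑ i, ∑ j, R (f i) (f j) (f j) (f i)) =
      ∑ i, ∑ j, R (v i) (v j) (v j) (v i) := by
    simpa using sum_quad_eq R (LinearMap.id : V →ₗ[ℝ] V) f v
  have C : (∑ i, ∑ j ∈ Ioi i, R (l (e i)) (l (e j)) (l (e j)) (l (e i))) ≤
      ∑ i, ∑ j ∈ Ioi i, R (f i) (f j) (f j) (f i) := by
    refine Finset.sum_le_sum fun i _ => Finset.sum_le_sum fun j hj => ?_
    exact key i j (ne_of_lt (Finset.mem_Ioi.mp hj))
  linarith
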